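/- Let ν ∈ (0,1), λ > 0, and set M = λ·ν^ν and F(R) = Σ_{k≥0} (λR)^k/(k!)^ν for R > 0. There exist a constant C > 0 and two real polynomials p₁, p₂ with positive coefficients such that C·R^{−1/ν}·e^{(MR)^{1/ν}} − p₁(R) ≤ F(R) ≤ p₂(R)·e^{(MR)^{1/ν}} for all R > 0 with MR > 1. -/

import Mathlib

/-- A real polynomial with positive coefficients: it is nonzero and every coefficient
appearing in it is positive. -/
def Polynomial.PosCoeffs (p : Polynomial ℝ) : Prop :=
  p ≠ 0 ∧ ∀ i ∈ p.support, 0 < p.coeff i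

private lemma rpow_add_le_aux {v : ℝ} (h0 : 0 < v) (h1 : v ≤ 1) {a b : ℝ}
    (ha : 0 ≤ a) (hb : 0 ≤ b) : (a + b) ^ v ≤ a ^ v + b ^ v := by
  rcases eq_or_lt_of_le ha with rfl | ha'
  · simp [Real.zero_rpow h0.ne']
  rcases eq_or_lt_of_le hb with rfl | hb'
  · simp [Real.zero_rpow h0.ne']
  have hab : 0 < a + b := by linarith
  have key : ∀ t : ℝ, 0 < t → t ≤ a + b → t / (a + b) ≤ (t / (a + b)) ^ v := by
    intro t ht hle
    have h01 : t / (a + b) ≤ 1 := (div_le_one hab).mpr hle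
    have hpos : 0 < t / (a + b) := div_pos ht hab
    calc t / (a + b) = (t / (a + b)) ^ (1 : ℝ) := (Real.rpow_one _).symm
      _ ≤ (t / (a + b)) ^ v := Real.rpow_le_rpow_of_exponent_ge hpos h01 h1
  have hsum : a / (a + b) + b / (a + b) = 1 := by field_simp
  have hone : 1 ≤ (a / (a + b)) ^ v + (b / (a + b)) ^ v := by
    rw [← hsum]
    exact add_le_add (key a ha' (by linarith)) (key b hb' (by linarith))
  have hda : (a / (a + b)) ^ v = a ^ v / (a + b) ^ v := Real.div_rpow ha hab.le v
  have hdb : (b / (a + b)) ^ v = b ^ v / (a + b) ^ v := Real.div_rpow hb hab.le v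
  have hp : 0 < (a + b) ^ v := Real.rpow_pos_of_pos hab v
  calc (a + b) ^ v = 1 * (a + b) ^ v := (one_mul _).symm
    _ ≤ ((a / (a + b)) ^ v + (b / (a + b)) ^ v) * (a + b) ^ v :=
        mul_le_mul_of_nonneg_right hone hp.le
    _ = a ^ v + b ^ v := by rw [hda, hdb]; field_simp

/-- Let `ν ∈ (0,1)`, `λ > 0`, `M = λ·ν^ν`, and `F(R) = Σ_{k≥0} (λR)^k/(k!)^ν`.  There
exist `C > 0` and polynomials `p₁, p₂` with positive coefficients such that
`C·R^(−1/ν)·e^((MR)^(1/ν)) − p₁(R) ≤ F(R) ≤ p₂(R)·e^((MR)^(1/ν))` whenever `R > 0` and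
`MR > 1`. -/
theorem cmp_partition_growth (nu lam : ℝ) (hnu : nu ∈ Set.Ioo (0 : ℝ) 1)
    (hlam : 0 < lam) :
    ∃ C : ℝ, 0 < C ∧ ∃ p₁ p₂ : Polynomial ℝ, p₁.PosCoeffs ∧ p₂.PosCoeffs ∧
      ∀ R : ℝ, 0 < R → 1 < lam * nu ^ nu * R →
        C * R ^ (-(1 / nu)) * Real.exp ((lam * nu ^ nu * R) ^ (1 / nu)) - p₁.eval R
            ≤ ∑' k : ℕ, (lam * R) ^ k / (k.factorial : ℝ) ^ nu ∧
          ∑' k : ℕ, (lam * R) ^ k / (k.factorial : ℝ) ^ nu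
            ≤ p₂.eval R * Real.exp ((lam * nu ^ nu * R) ^ (1 / nu)) := by
  obtain ⟨hν0, hν1⟩ := hnu
  have hνne : nu ≠ 0 := hν0.ne'
  set M : ℝ := lam * nu ^ nu with hMdef
  have hνν : (0 : ℝ) < nu ^ nu := Real.rpow_pos_of_pos hν0 nu
  have hνν1 : nu ^ nu ≤ 1 := Real.rpow_le_one hν0.le hν1.le hν0.le
  have hM : 0 < M := mul_pos hlam hνν
  clear_value M
  set b : ℝ := (1 - nu) / nu with hbdef
  have hb0 : 0 < b := div_pos (by linarith) hν0
  have hβν : b * nu = 1 - nu := by rw [hbdef]; field_simp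
  clear_value b
  set n : ℕ := ⌈b⌉₊ with hn
  have hbn : b ≤ (n : ℝ) := Nat.le_ceil b
  clear_value n
  refine ⟨M ^ (-(1 / nu)), Real.rpow_pos_of_pos hM _, 1,
    Polynomial.C (Real.exp (Real.exp 1) * lam ^ n) * Polynomial.X ^ n, ?_, ?_, ?_⟩
  · refine ⟨one_ne_zero, fun i hi => ?_⟩
    rw [Polynomial.mem_support_iff] at hi
    rcases eq_or_ne i 0 with rfl | h
    · simp
    · simp [Polynomial.coeff_one, h] at hi
  · have hc : Real.exp (Real.exp 1) * lam ^ n ≠ 0 := by positivity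
    refine ⟨fun h => ?_, fun i hi => ?_⟩
    · have h2 : (Polynomial.C (Real.exp (Real.exp 1) * lam ^ n) * Polynomial.X ^ n).coeff n
          = Real.exp (Real.exp 1) * lam ^ n := by
        rw [Polynomial.coeff_C_mul_X_pow]; simp
      rw [h, Polynomial.coeff_zero] at h2
      exact hc h2.symm
      -- done
    · rw [Polynomial.support_C_mul_X_pow n hc, Finset.mem_singleton] at hi
      subst hi
      rw [Polynomial.coeff_C_mul_X_pow]
      simp only [if_pos rfl]
      positivity
  intro R hR hMR
  set x : ℝ := lam * R with hxdef
  have hx0 : 0 < x := mul_pos hlam hR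
  have hMx : M * R = nu ^ nu * x := by rw [hMdef, hxdef]; ring
  clear_value x
  have hMR' : 1 < nu ^ nu * x := by rw [← hMx]; exact hMR
  have hx1 : 1 < x := by nlinarith
  set A : ℝ := x ^ (1 / nu) with hAdef
  have hA0 : 0 < A := Real.rpow_pos_of_pos hx0 _
  have hA1 : 1 < A :=
    (Real.one_lt_rpow_iff_of_pos hx0).mpr (Or.inl ⟨hx1, by positivity⟩)
  clear_value A
  have hAnu : A ^ nu = x := by
    rw [hAdef, ← Real.rpow_mul hx0.le, one_div, inv_mul_cancel₀ hνne, Real.rpow_one]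
  have hE : (M * R) ^ (1 / nu) = nu * A := by
    have h1 : (nu ^ nu) ^ (1 / nu) = nu := by
      rw [← Real.rpow_mul hν0.le, mul_one_div, div_self hνne, Real.rpow_one]
    rw [hMx, Real.mul_rpow hνν.le hx0.le, h1, hAdef]
  -- A⁻¹ < nu
  have hxgt : (nu ^ nu)⁻¹ < x := by
    have hinv : nu ^ nu * (nu ^ nu)⁻¹ = 1 := mul_inv_cancel₀ hνν.ne'
    nlinarith
  have hA_gt : nu⁻¹ < A := by
    have h2 : ((nu ^ nu)⁻¹ : ℝ) ^ (1 / nu) = nu⁻¹ := by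
      rw [← Real.rpow_neg hν0.le, ← Real.rpow_mul hν0.le, neg_mul, mul_one_div,
        div_self hνne, Real.rpow_neg_one]
    rw [← h2, hAdef]
    exact Real.rpow_lt_rpow (by positivity) hxgt (by positivity)
  have hu : A⁻¹ < nu := by
    have h1 : 1 < nu * A := by
      have := mul_lt_mul_of_pos_left hA_gt hν0
      rwa [mul_inv_cancel₀ hνne] at this
    have h2 : A * A⁻¹ = 1 := mul_inv_cancel₀ hA0.ne'
    nlinarith [inv_pos.mpr hA0]
  set z : ℝ := 1 - A⁻¹ with hzdef
  clear_value z
  have hAinv0 : 0 < A⁻¹ := inv_pos.mpr hA0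
  have hzν : 1 - nu < z := by rw [hzdef]; linarith
  have hz0 : 0 < z := by linarith
  have hz1 : z < 1 := by rw [hzdef]; linarith
  have h1z : 1 - z = A⁻¹ := by rw [hzdef]; ring
  set y : ℝ := A * z ^ (-b) with hydef
  have hzb0 : 0 < z ^ (-b) := Real.rpow_pos_of_pos hz0 _
  have hy0 : 0 < y := mul_pos hA0 hzb0
  clear_value y
  have h3 : (z ^ (-b)) ^ nu = z ^ (-(1 - nu)) := by
    calc (z ^ (-b)) ^ nu = z ^ (-b * nu) := (Real.rpow_mul hz0.le _ _).symm
      _ = z ^ (-(1 - nu)) := by rw [neg_mul, hβν]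
  have hyx : y ^ nu * z ^ (1 - nu) = x := by
    rw [hydef, Real.mul_rpow hA0.le hzb0.le, hAnu, h3, mul_assoc,
      ← Real.rpow_add hz0, neg_add_cancel, Real.rpow_zero, mul_one]
  -- series
  have ha : HasSum (fun k : ℕ => y ^ k / (k.factorial : ℝ)) (Real.exp y) := by
    rw [Real.exp_eq_exp_ℝ]
    exact NormedSpace.expSeries_div_hasSum_exp y
  have hcA : HasSum (fun k : ℕ => A ^ k / (k.factorial : ℝ)) (Real.exp A) := by
    rw [Real.exp_eq_exp_ℝ]
    exact NormedSpace.expSeries_div_hasSum_exp A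
  have hgeo : HasSum (fun k : ℕ => z ^ k) A := by
    have h := hasSum_geometric_of_lt_one hz0.le hz1
    rwa [h1z, inv_inv] at h
  set K : ℝ := Real.exp y ^ nu * A ^ (1 - nu) with hKdef
  have hK0 : 0 < K :=
    mul_pos (Real.rpow_pos_of_pos (Real.exp_pos y) _) (Real.rpow_pos_of_pos hA0 _)
  clear_value K
  have key : ∀ k : ℕ, x ^ k / (k.factorial : ℝ) ^ nu ≤
      (nu * (y ^ k / (k.factorial : ℝ) / Real.exp y) + (1 - nu) * (z ^ k / A)) * K := by
    intro k
    have hfk : (0 : ℝ) < (k.factorial : ℝ) := by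
      exact_mod_cast k.factorial_pos
    have ha' : (0 : ℝ) ≤ y ^ k / (k.factorial : ℝ) / Real.exp y := by positivity
    have hb' : (0 : ℝ) ≤ z ^ k / A := by positivity
    have amgm := Real.geom_mean_le_arith_mean2_weighted (w₁ := nu) (w₂ := 1 - nu)
      (p₁ := y ^ k / (k.factorial : ℝ) / Real.exp y) (p₂ := z ^ k / A)
      hν0.le (by linarith) ha' hb' (by ring)
    have h4 : (y ^ k / (k.factorial : ℝ)) ^ nu * (z ^ k) ^ (1 - nu)
        = x ^ k / (k.factorial : ℝ) ^ nu := by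
      rw [Real.div_rpow (by positivity) hfk.le]
      have hy' : (y ^ k) ^ nu = (y ^ nu) ^ k := by
        rw [← Real.rpow_natCast y k, ← Real.rpow_natCast (y ^ nu) k,
          ← Real.rpow_mul hy0.le, ← Real.rpow_mul hy0.le, mul_comm]
      have hz' : (z ^ k) ^ (1 - nu) = (z ^ (1 - nu)) ^ k := by
        rw [← Real.rpow_natCast z k, ← Real.rpow_natCast (z ^ (1 - nu)) k,
          ← Real.rpow_mul hz0.le, ← Real.rpow_mul hz0.le, mul_comm]
      rw [hy', hz', div_mul_eq_mul_div, ← mul_pow, hyx]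
    have lhs_eq : (y ^ k / (k.factorial : ℝ) / Real.exp y) ^ nu * (z ^ k / A) ^ (1 - nu)
        = (x ^ k / (k.factorial : ℝ) ^ nu) / K := by
      rw [Real.div_rpow (by positivity) (Real.exp_pos y).le,
        Real.div_rpow (by positivity) hA0.le, div_mul_div_comm, h4, hKdef]
    calc x ^ k / (k.factorial : ℝ) ^ nu
        = ((y ^ k / (k.factorial : ℝ) / Real.exp y) ^ nu * (z ^ k / A) ^ (1 - nu)) * K := by
          rw [lhs_eq, div_mul_cancel₀ _ hK0.ne']
      _ ≤ (nu * (y ^ k / (k.factorial : ℝ) / Real.exp y) + (1 - nu) * (z ^ k / A)) * K :=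
          mul_le_mul_of_nonneg_right amgm hK0.le
  have hgsum : HasSum (fun k : ℕ =>
      (nu * (y ^ k / (k.factorial : ℝ) / Real.exp y) + (1 - nu) * (z ^ k / A)) * K) K := by
    have h1 := (((ha.div_const (Real.exp y)).mul_left nu).add
      ((hgeo.div_const A).mul_left (1 - nu))).mul_right K
    have h2 : (nu * (Real.exp y / Real.exp y) + (1 - nu) * (A / A)) * K = K := by
      rw [div_self (Real.exp_pos y).ne', div_self hA0.ne']; ring
    rwa [h2] at h1
  have hnonneg : ∀ k : ℕ, 0 ≤ x ^ k / (k.factorial : ℝ) ^ nu := by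
    intro k
    have hfk : (0 : ℝ) < (k.factorial : ℝ) := by exact_mod_cast k.factorial_pos
    positivity
  have hFs : Summable (fun k : ℕ => x ^ k / (k.factorial : ℝ) ^ nu) :=
    Summable.of_nonneg_of_le hnonneg key hgsum.summable
  have hFK : (∑' k : ℕ, x ^ k / (k.factorial : ℝ) ^ nu) ≤ K :=
    le_of_le_of_eq (Summable.tsum_le_tsum key hFs hgsum.summable) hgsum.tsum_eq
  -- core exponent bound : y * nu ≤ nu * A + e
  set s : ℝ := b * (z⁻¹ - 1) with hsdef
  have hzinv : z⁻¹ - 1 = A⁻¹ / z := by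
    rw [eq_div_iff hz0.ne', sub_mul, inv_mul_cancel₀ hz0.ne']
    linarith
  have hs0 : 0 ≤ s := by
    have : 0 ≤ z⁻¹ - 1 := by rw [hzinv]; positivity
    exact mul_nonneg hb0.le this
  clear_value s
  have hzb : z ^ (-b) ≤ Real.exp s := by
    rw [hsdef, Real.rpow_def_of_pos hz0]
    apply Real.exp_le_exp.mpr
    have hlog : Real.log z⁻¹ ≤ z⁻¹ - 1 := Real.log_le_sub_one_of_pos (inv_pos.mpr hz0)
    rw [Real.log_inv] at hlog
    calc Real.log z * (-b) = b * (-Real.log z) := by ring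
      _ ≤ b * (z⁻¹ - 1) := mul_le_mul_of_nonneg_left hlog hb0.le
  have hs1 : s ≤ 1 := by
    rw [hsdef, hzinv]
    have h5 : b * (A⁻¹ / z) = (b * A⁻¹) / z := by ring
    rw [h5, div_le_one hz0]
    have h6 : b * A⁻¹ ≤ b * nu := mul_le_mul_of_nonneg_left hu.le hb0.le
    rw [hβν] at h6
    linarith
  have hexp : Real.exp s ≤ 1 + s * Real.exp 1 := by
    have h5 : 1 - s ≤ (Real.exp s)⁻¹ := by
      have h := Real.add_one_le_exp (-s)
      rw [Real.exp_neg] at h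
      linarith
    have h6 : (1 - s) * Real.exp s ≤ 1 := by
      have h := mul_le_mul_of_nonneg_right h5 (Real.exp_pos s).le
      rwa [inv_mul_cancel₀ (Real.exp_pos s).ne'] at h
    have h7 : Real.exp s ≤ Real.exp 1 := Real.exp_le_exp.mpr hs1
    rw [sub_mul, one_mul] at h6
    have h8 : s * Real.exp s ≤ s * Real.exp 1 := mul_le_mul_of_nonneg_left h7 hs0
    linarith
  have hAs : A * s * nu ≤ 1 := by
    have hs_eq : A * s * nu = (1 - nu) / z := by
      rw [hsdef, hzinv,
        show A * (b * (A⁻¹ / z)) * nu = A * A⁻¹ * (b * nu) / z from by ring,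
        mul_inv_cancel₀ hA0.ne', hβν, one_mul]
    rw [hs_eq, div_le_one hz0]
    linarith
  have hcore : y * nu ≤ nu * A + Real.exp 1 := by
    have h8 : z ^ (-b) ≤ 1 + s * Real.exp 1 := hzb.trans hexp
    have h9 : A * z ^ (-b) * nu ≤ A * (1 + s * Real.exp 1) * nu :=
      mul_le_mul_of_nonneg_right (mul_le_mul_of_nonneg_left h8 hA0.le) hν0.le
    have h10 : A * (1 + s * Real.exp 1) * nu = nu * A + (A * s * nu) * Real.exp 1 := by ring
    have h11 : (A * s * nu) * Real.exp 1 ≤ 1 * Real.exp 1 :=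
      mul_le_mul_of_nonneg_right hAs (Real.exp_pos 1).le
    rw [h10] at h9
    rw [one_mul] at h11
    rw [hydef]
    linarith
  -- polynomial bound on A^(1-nu)
  have hApoly : A ^ (1 - nu) ≤ lam ^ n * R ^ n := by
    have hb_eq : A ^ (1 - nu) = x ^ b := by
      rw [hAdef, ← Real.rpow_mul hx0.le]
      congr 1
      rw [hbdef]; ring
    have h12 : x ^ b ≤ x ^ (n : ℝ) :=
      Real.rpow_le_rpow_of_exponent_le hx1.le hbn
    have h13 : x ^ (n : ℝ) = x ^ n := Real.rpow_natCast x n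
    have h14 : x ^ n = lam ^ n * R ^ n := by rw [hxdef, mul_pow]
    rw [hb_eq]
    rw [h13, h14] at h12
    exact h12
  -- upper bound
  have hupper : (∑' k : ℕ, x ^ k / (k.factorial : ℝ) ^ nu)
      ≤ Real.exp (Real.exp 1) * lam ^ n * R ^ n * Real.exp ((M * R) ^ (1 / nu)) := by
    have hKle : K ≤ Real.exp (Real.exp 1) * lam ^ n * R ^ n * Real.exp (nu * A) := by
      have h15 : Real.exp y ^ nu = Real.exp (y * nu) := (Real.exp_mul y nu).symm
      have h16 : Real.exp (y * nu) ≤ Real.exp (nu * A) * Real.exp (Real.exp 1) := by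
        rw [← Real.exp_add]
        exact Real.exp_le_exp.mpr hcore
      calc K = Real.exp (y * nu) * A ^ (1 - nu) := by rw [hKdef, h15]
        _ ≤ (Real.exp (nu * A) * Real.exp (Real.exp 1)) * (lam ^ n * R ^ n) :=
            mul_le_mul h16 hApoly (Real.rpow_pos_of_pos hA0 _).le (by positivity)
        _ = Real.exp (Real.exp 1) * lam ^ n * R ^ n * Real.exp (nu * A) := by ring
    rw [hE]
    exact hFK.trans hKle
  -- lower bound
  have hsub0 : ∀ t : Finset ℕ,
      (∑ k ∈ t, A ^ k / (k.factorial : ℝ)) ^ nu ≤ ∑ k ∈ t, (A ^ k / (k.factorial : ℝ)) ^ nu := by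
    intro t
    induction t using Finset.cons_induction with
    | empty => simp [Real.zero_rpow hνne]
    | cons a t hat ih =>
      rw [Finset.sum_cons, Finset.sum_cons]
      refine le_trans (rpow_add_le_aux hν0 hν1.le (by positivity)
        (Finset.sum_nonneg fun k _ => by positivity)) ?_
      exact add_le_add_right ih _
  have h0' : ∀ k : ℕ, (A ^ k / (k.factorial : ℝ)) ^ nu = x ^ k / (k.factorial : ℝ) ^ nu := by
    intro k
    have hfk : (0 : ℝ) < (k.factorial : ℝ) := by exact_mod_cast k.factorial_pos
    rw [Real.div_rpow (by positivity) hfk.le]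
    congr 1
    calc (A ^ k) ^ nu = (A ^ nu) ^ k := by
          rw [← Real.rpow_natCast A k, ← Real.rpow_natCast (A ^ nu) k,
            ← Real.rpow_mul hA0.le, ← Real.rpow_mul hA0.le, mul_comm]
      _ = x ^ k := by rw [hAnu]
  have hlow : Real.exp (A * nu) ≤ ∑' k : ℕ, x ^ k / (k.factorial : ℝ) ^ nu := by
    have htend : Filter.Tendsto
        (fun t : Finset ℕ => (∑ k ∈ t, A ^ k / (k.factorial : ℝ)) ^ nu)
        Filter.atTop (nhds (Real.exp A ^ nu)) :=
      Filter.Tendsto.rpow_const hcA (Or.inr hν0.le)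
    have hle : ∀ t : Finset ℕ,
        (∑ k ∈ t, A ^ k / (k.factorial : ℝ)) ^ nu ≤ ∑' k : ℕ, x ^ k / (k.factorial : ℝ) ^ nu := by
      intro t
      refine le_trans (hsub0 t) ?_
      have : ∑ k ∈ t, (A ^ k / (k.factorial : ℝ)) ^ nu
          = ∑ k ∈ t, x ^ k / (k.factorial : ℝ) ^ nu :=
        Finset.sum_congr rfl fun k _ => h0' k
      rw [this]
      exact Summable.sum_le_tsum t (fun k _ => hnonneg k) hFs
    have h17 : Real.exp A ^ nu = Real.exp (A * nu) := (Real.exp_mul A nu).symm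
    rw [← h17]
    exact le_of_tendsto htend (Filter.Eventually.of_forall hle)
  constructor
  · -- lower bound in required form
    have hCle : M ^ (-(1 / nu)) * R ^ (-(1 / nu)) ≤ 1 := by
      rw [← Real.mul_rpow hM.le hR.le]
      refine (Real.rpow_lt_one_of_one_lt_of_neg hMR ?_).le
      have : (0 : ℝ) < 1 / nu := by positivity
      linarith
    have hexpE : (0 : ℝ) < Real.exp ((M * R) ^ (1 / nu)) := Real.exp_pos _
    have hCmul : M ^ (-(1 / nu)) * R ^ (-(1 / nu)) * Real.exp ((M * R) ^ (1 / nu))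
        ≤ Real.exp ((M * R) ^ (1 / nu)) := by
      have h := mul_le_mul_of_nonneg_right hCle hexpE.le
      rwa [one_mul] at h
    have hEA : Real.exp ((M * R) ^ (1 / nu)) = Real.exp (A * nu) := by
      rw [hE, mul_comm]
    have hp1 : (1 : Polynomial ℝ).eval R = 1 := Polynomial.eval_one
    rw [hp1]
    rw [hEA] at hCmul
    rw [hEA]
    linarith [hlow]
  · have hp2 : (Polynomial.C (Real.exp (Real.exp 1) * lam ^ n) * Polynomial.X ^ n).eval R
        = Real.exp (Real.exp 1) * lam ^ n * R ^ n := by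
      simp [mul_assoc]
    rw [hp2]
    exact hupper
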